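/- Let L ≥ 1, s ≥ L, and R ∈ [0,1]. If L > (1-R-ε)/ε and s > L(L-1)R/(εL-(1-R-ε)) + L - 1 for some ε > 0 with εL > 1-R-ε, then (L/(L+1))·(1 - sR/(s-L+1)) > 1 - R - ε. -/
import Mathlib


/-- Parameter computation: with `L > (1-R-ε)/ε` and
`s > L(L-1)R/(εL-(1-R-ε)) + L - 1`, the list-decoding radius
`(L/(L+1))·(1 - sR/(s-L+1))` exceeds `1 - R - ε`. -/
theorem frs_parameter_computation (ε R : ℝ) (L s : ℕ)
    (hε : 0 < ε) (hR0 : 0 ≤ R) (hR1 : R ≤ 1) (hL : 1 ≤ L) (hsL : L ≤ s)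
    (hden : 0 < ε * L - (1 - R - ε))
    (hLlb : (L : ℝ) > (1 - R - ε) / ε)
    (hslb : (s : ℝ) > L * (L - 1) * R / (ε * L - (1 - R - ε)) + L - 1) :
    ((L : ℝ) / (L + 1)) * (1 - s * R / (s - L + 1)) > 1 - R - ε := by
  have hLs : (L : ℝ) ≤ s := by exact_mod_cast hsL
  have hL1 : (1 : ℝ) ≤ L := by exact_mod_cast hL
  have hn : (0 : ℝ) < (s : ℝ) - L + 1 := by linarith
  have hL1' : (0 : ℝ) < (L : ℝ) + 1 := by linarith
  have key : (L : ℝ) * (L - 1) * R < ((s : ℝ) - L + 1) * (ε * L - (1 - R - ε)) :=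
    (div_lt_iff₀ hden).mp (by linarith)
  have hmain : (1 - R - ε) * (((L : ℝ) + 1) * ((s : ℝ) - L + 1)) <
      (L : ℝ) * (((s : ℝ) - L + 1) - s * R) := by nlinarith [key, hn]
  have heq : ((L : ℝ) / (L + 1)) * (1 - s * R / (s - L + 1)) =
      (L : ℝ) * (((s : ℝ) - L + 1) - s * R) / (((L : ℝ) + 1) * ((s : ℝ) - L + 1)) := by
    field_simp
  rw [gt_iff_lt, heq, lt_div_iff₀ (by positivity)]
  exact hmain
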